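/- Let f : ℝⁿ → ℝ be twice continuously differentiable with L_H-Lipschitz Hessian. Fix x ∈ ℝⁿ, set g := ∇f(x) and H := ∇²f(x). Let κ_B > 0 with ‖H‖ ≤ κ_B, let σ > 0, κ_C > 0, ε > 0 with ‖g‖ ≥ ε, and let v ∈ ℝⁿ satisfy ‖v‖ = 1, ⟨g,v⟩ ≤ 0 and ⟨v,Hv⟩ ≤ −κ_C·√(σ‖g‖). Set s := (κ_C·√(σ‖g‖)/σ)·v. Then ‖∇f(x+s)‖ ≤ (L_H κ_C²/(2σ) + κ_B κ_C/√(ε σ) + 1)·‖g‖. -/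

import Mathlib

set_option maxHeartbeats 800000


open RealInnerProductSpace

/-- Lemma 3.2 of the paper, inequality (3.8): gradient growth after a
negative-curvature step. -/
theorem gradient_growth_curv_step {n : ℕ}
    (f : EuclideanSpace ℝ (Fin n) → ℝ)
    (Hess : EuclideanSpace ℝ (Fin n) → EuclideanSpace ℝ (Fin n) →L[ℝ] EuclideanSpace ℝ (Fin n))
    (LH : ℝ)
    (hf : ContDiff ℝ 2 f)
    (hHess : ∀ y, HasFDerivAt (gradient f) (Hess y) y)
    (hLip : ∀ y z, ‖Hess y - Hess z‖ ≤ LH * ‖y - z‖)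
    (x : EuclideanSpace ℝ (Fin n))
    (κB : ℝ) (hκB : 0 < κB) (hHB : ‖Hess x‖ ≤ κB)
    (σ κC ε : ℝ) (hσ : 0 < σ) (hκC : 0 < κC) (hε : 0 < ε) (hgε : ε ≤ ‖gradient f x‖)
    (v : EuclideanSpace ℝ (Fin n)) (hv : ‖v‖ = 1) (hgv : ⟪gradient f x, v⟫ ≤ 0)
    (hcurv : ⟪v, Hess x v⟫ ≤ -κC * Real.sqrt (σ * ‖gradient f x‖))
    (s : EuclideanSpace ℝ (Fin n))
    (hs : s = (κC * Real.sqrt (σ * ‖gradient f x‖) / σ) • v) :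
    ‖gradient f (x + s)‖
      ≤ (LH * κC ^ 2 / (2 * σ) + κB * κC / Real.sqrt (ε * σ) + 1) * ‖gradient f x‖ := by
  set g0 := gradient f x with hg0
  set G := ‖g0‖ with hG
  have hGpos : 0 < G := lt_of_lt_of_le hε hgε
  have hLH0 : 0 ≤ LH := by
    have := hLip (x + v) x
    have h1 : ‖x + v - x‖ = 1 := by simp [hv]
    rw [h1, mul_one] at this
    exact le_trans (norm_nonneg _) this
  -- derivative of the curve
  have hder : ∀ t : ℝ, HasDerivAt (fun t : ℝ => gradient f (x + t • s))
      (Hess (x + t • s) s) t := by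
    intro t
    have h1 : HasDerivAt (fun t : ℝ => x + t • s) s t := by
      simpa using (((hasDerivAt_id t).smul_const s).const_add x)
    exact (hHess (x + t • s)).comp_hasDerivAt t h1
  set c : EuclideanSpace ℝ (Fin n) := Hess x s with hc
  set φ : ℝ → EuclideanSpace ℝ (Fin n) :=
    fun t => gradient f (x + t • s) - g0 - t • c with hφ
  have hφ' : ∀ t : ℝ, HasDerivAt φ (Hess (x + t • s) s - c) t := by
    intro t
    have := ((hder t).sub_const g0).sub ((hasDerivAt_id t).smul_const c)
    rw [one_smul] at this
    exact this
  -- Taylor bound via fencing theorem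
  have htaylor : ‖φ 1‖ ≤ LH * ‖s‖ ^ 2 / 2 * 1 ^ 2 := by
    have hB : ∀ t : ℝ, HasDerivAt (fun t : ℝ => LH * ‖s‖ ^ 2 / 2 * t ^ 2)
        (LH * ‖s‖ ^ 2 * t) t := by
      intro t
      have := (hasDerivAt_pow 2 t).const_mul (LH * ‖s‖ ^ 2 / 2)
      refine this.congr_deriv ?_
      ring
    have bound : ∀ t ∈ Set.Ico (0 : ℝ) 1, ‖Hess (x + t • s) s - c‖ ≤ LH * ‖s‖ ^ 2 * t := by
      intro t ht
      have h1 : Hess (x + t • s) s - c = (Hess (x + t • s) - Hess x) s := by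
        simp [hc]
      rw [h1]
      calc ‖(Hess (x + t • s) - Hess x) s‖ ≤ ‖Hess (x + t • s) - Hess x‖ * ‖s‖ :=
            ContinuousLinearMap.le_opNorm _ _
        _ ≤ LH * ‖x + t • s - x‖ * ‖s‖ := by
            gcongr; exact hLip _ _
        _ = LH * ‖s‖ ^ 2 * t := by
            have : ‖x + t • s - x‖ = t * ‖s‖ := by
              simp [norm_smul, abs_of_nonneg ht.1]
            rw [this]; ring
    have ha : ‖φ 0‖ ≤ LH * ‖s‖ ^ 2 / 2 * 0 ^ 2 := by simp [hφ, hg0]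
    have := image_norm_le_of_norm_deriv_right_le_deriv_boundary
      (f := φ) (f' := fun t => Hess (x + t • s) s - c) (a := 0) (b := 1)
      (fun t _ => (hφ' t).continuousAt.continuousWithinAt)
      (fun t _ => (hφ' t).hasDerivWithinAt.mono (Set.Ici_subset_Ici.mpr le_rfl))
      ha hB bound
    exact this (Set.right_mem_Icc.mpr zero_le_one)
  have htaylor' : ‖φ 1‖ ≤ LH * ‖s‖ ^ 2 / 2 := by simpa using htaylor
  -- triangle inequality
  have hdecomp : gradient f (x + s) = φ 1 + c + g0 := by
    simp [hφ]
  have htri : ‖gradient f (x + s)‖ ≤ ‖φ 1‖ + ‖c‖ + ‖g0‖ := by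
    rw [hdecomp]
    exact le_trans (norm_add_le _ _) (by gcongr; exact norm_add_le _ _)
  have hcnorm : ‖c‖ ≤ κB * ‖s‖ := by
    calc ‖c‖ ≤ ‖Hess x‖ * ‖s‖ := ContinuousLinearMap.le_opNorm _ _
      _ ≤ κB * ‖s‖ := by gcongr
  -- norm of s
  have hσG : (0:ℝ) ≤ σ * G := by positivity
  have hsn : ‖s‖ = κC * Real.sqrt (σ * G) / σ := by
    rw [hs, norm_smul, hv, mul_one, Real.norm_of_nonneg (by positivity)]
  have hssq : ‖s‖ ^ 2 = κC ^ 2 * G / σ := by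
    rw [hsn]
    rw [div_pow, mul_pow, Real.sq_sqrt hσG]
    field_simp
  -- arithmetic
  set a := Real.sqrt σ with hasq
  set b := Real.sqrt G with hbsq
  set e := Real.sqrt ε with hesq
  have ha2 : a ^ 2 = σ := Real.sq_sqrt hσ.le
  have hb2 : b ^ 2 = G := Real.sq_sqrt hGpos.le
  have he2 : e ^ 2 = ε := Real.sq_sqrt hε.le
  have hapos : 0 < a := Real.sqrt_pos.mpr hσ
  have hbpos : 0 < b := Real.sqrt_pos.mpr hGpos
  have hepos : 0 < e := Real.sqrt_pos.mpr hε
  have heb : e ≤ b := Real.sqrt_le_sqrt hgε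
  have hsqrtσG : Real.sqrt (σ * G) = a * b := Real.sqrt_mul hσ.le G
  have hsqrtεσ : Real.sqrt (ε * σ) = e * a := Real.sqrt_mul hε.le σ
  clear_value a b e
  have key : LH * ‖s‖ ^ 2 / 2 + κB * ‖s‖ + G
      ≤ (LH * κC ^ 2 / (2 * σ) + κB * κC / Real.sqrt (ε * σ) + 1) * G := by
    rw [hssq, hsn, hsqrtσG, hsqrtεσ]
    rw [← ha2, ← hb2]
    have h1 : LH * (κC ^ 2 * (b^2) / (a^2)) / 2 = LH * κC ^ 2 / (2 * (a^2)) * (b^2) := by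
      field_simp
    rw [h1]
    have h2 : κB * (κC * (a * b) / (a^2)) ≤ κB * κC / (e * a) * (b^2) := by
      have heq : κB * (κC * (a * b) / (a^2)) = κB * κC * b / a := by
        field_simp
      rw [heq, div_mul_eq_mul_div, div_le_div_iff₀ hapos (by positivity)]
      have := mul_le_mul_of_nonneg_left heb
        (by positivity : (0:ℝ) ≤ κB * κC * b * a)
      nlinarith [this]
    have h3 : (LH * κC ^ 2 / (2 * a ^ 2) + κB * κC / (e * a) + 1) * b ^ 2
        = LH * κC ^ 2 / (2 * a ^ 2) * b ^ 2 + κB * κC / (e * a) * b ^ 2 + b ^ 2 := by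
      ring
    rw [h3]
    linarith [h2]
  calc ‖gradient f (x + s)‖ ≤ ‖φ 1‖ + ‖c‖ + ‖g0‖ := htri
    _ ≤ LH * ‖s‖ ^ 2 / 2 + κB * ‖s‖ + G := by gcongr
    _ ≤ _ := key
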